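/- Let A be a C*-algebra and let x ∈ A be selfadjoint with x₊ ≠ 0 and x₋ ≠ 0 (where x = x₊ − x₋ is the decomposition into positive and negative parts). Then for every n ∈ ℕ and every matrix a ∈ Matrix (Fin n) (Fin n) ℂ, if the matrix X with entries X i j = (a i j) • x is positive in Mₙ(A) (i.e., 0 ≤ X), then a = 0 (and hence X = 0). Equivalently, Mₙ(span{x}) ∩ Mₙ(A)₊ = {0} for all n; in particular, for c ∈ ℂ, 0 ≤ c • x implies c • x = 0. -/

import Mathlib

noncomputable section

private lemma matrix_pos_aux {A : Type*} [NonUnitalCStarAlgebra A] [PartialOrder A]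
    [StarOrderedRing A] {n : ℕ} {X : Matrix (Fin n) (Fin n) A}
    (hX : X ∈ AddSubmonoid.closure (Set.range fun s : Matrix (Fin n) (Fin n) A => star s * s)) :
    ∀ i, 0 ≤ X i i ∧ (X i i = 0 → ∀ j, X i j = 0) := by
  induction hX using AddSubmonoid.closure_induction with
  | mem y hy =>
    obtain ⟨Z, rfl⟩ := hy
    intro i
    have hentry : ∀ i j, (star Z * Z) i j = ∑ k, star (Z k i) * Z k j := by
      intro i j
      simp [Matrix.mul_apply, Matrix.star_apply, Matrix.conjTranspose_apply]
    refine ⟨?_, ?_⟩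
    · show 0 ≤ (star Z * Z) i i
      rw [hentry]
      exact Finset.sum_nonneg fun k _ => star_mul_self_nonneg _
    · intro h0 j
      replace h0 : (star Z * Z) i i = 0 := h0
      show (star Z * Z) i j = 0
      rw [hentry] at h0
      have hz : ∀ k ∈ Finset.univ, star (Z k i) * Z k i = 0 :=
        (Finset.sum_eq_zero_iff_of_nonneg fun k _ => star_mul_self_nonneg _).mp h0
      have hz' : ∀ k, Z k i = 0 := fun k =>
        (CStarRing.star_mul_self_eq_zero_iff _).mp (hz k (Finset.mem_univ k))
      rw [hentry]
      exact Finset.sum_eq_zero fun k _ => by rw [hz', star_zero, zero_mul]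
  | zero =>
    intro i
    exact ⟨le_refl _, fun _ j => rfl⟩
  | add a b ha hb pa pb =>
    intro i
    obtain ⟨pa1, pa2⟩ := pa i
    obtain ⟨pb1, pb2⟩ := pb i
    have hadd : ∀ j, (a + b) i j = a i j + b i j := fun j => rfl
    constructor
    · rw [hadd]; exact add_nonneg pa1 pb1
    · intro h0 j
      rw [hadd] at h0
      have ha0 : a i i = 0 := le_antisymm (by
        have : a i i ≤ a i i + b i i := le_add_of_nonneg_right pb1
        rw [h0] at this; exact this) pa1
      have hb0 : b i i = 0 := by
        rw [ha0, zero_add] at h0; exact h0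
      rw [hadd, pa2 ha0 j, pb2 hb0 j, add_zero]

/-- **Lemma 5.1 (i).** Let `x` be a selfadjoint element of a C*-algebra `A`
with nonzero positive and negative parts `xp`, `xm`.  Then `Mₙ(span{x})` meets the positive
cone of `Mₙ(A)` only at `0`: any matrix `(a i j • x)` which is positive in `Mₙ(A)` has
`a = 0`.  In particular `0 ≤ c • x` forces `c • x = 0`. -/
theorem stmt_15 {A : Type*} [NonUnitalCStarAlgebra A] [PartialOrder A] [StarOrderedRing A]
    (x xp xm : A) (hx : IsSelfAdjoint x)
    (hxp : 0 ≤ xp) (hxm : 0 ≤ xm) (hsub : x = xp - xm) (horth : xp * xm = 0)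
    (hxp0 : xp ≠ 0) (hxm0 : xm ≠ 0)
    (M : ℕ → Type*) [∀ n, NonUnitalCStarAlgebra (M n)] [∀ n, PartialOrder (M n)]
    [∀ n, StarOrderedRing (M n)]
    (e : ∀ n, Matrix (Fin n) (Fin n) A ≃⋆ₐ[ℂ] M n) :
    (∀ (n : ℕ) (a : Matrix (Fin n) (Fin n) ℂ),
      0 ≤ (e n) (Matrix.of fun i j => a i j • x) → a = 0) ∧
    (∀ c : ℂ, 0 ≤ c • x → c • x = 0) := by
  have hxpsa : IsSelfAdjoint xp := IsSelfAdjoint.of_nonneg hxp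
  have hxmsa : IsSelfAdjoint xm := IsSelfAdjoint.of_nonneg hxm
  -- cube of a nonneg nonzero element is nonzero
  have cube_ne : ∀ y : A, 0 ≤ y → y ≠ 0 → y * y * y ≠ 0 := by
    intro y hy hy0 h3
    have hysa : IsSelfAdjoint y := IsSelfAdjoint.of_nonneg hy
    have h4 : star (y * y) * (y * y) = 0 := by
      rw [show star (y * y) = y * y by simp [star_mul, hysa.star_eq],
        ← mul_assoc, h3, zero_mul]
    have h5 : y * y = 0 := (CStarRing.star_mul_self_eq_zero_iff _).mp h4
    have h6 : star y * y = 0 := by rw [hysa.star_eq]; exact h5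
    exact hy0 ((CStarRing.star_mul_self_eq_zero_iff _).mp h6)
  have hxm_xp : xm * xp = 0 := by
    have := congrArg star horth
    rwa [star_mul, hxpsa.star_eq, hxmsa.star_eq, star_zero] at this
  have hxne : x ≠ 0 := by
    intro h
    rw [h] at hsub
    have hpe : xp = xm := by
      have := hsub.symm
      rwa [sub_eq_zero] at this
    have h1 : xp * xp = 0 := by rw [hpe] at horth ⊢; exact horth
    have h2 : star xp * xp = 0 := by rw [hxpsa.star_eq]; exact h1
    exact hxp0 ((CStarRing.star_mul_self_eq_zero_iff _).mp h2)
  -- key scalar fact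
  have key : ∀ c : ℂ, 0 ≤ c • x → c = 0 := by
    intro c hc
    have hsa : IsSelfAdjoint (c • x) := IsSelfAdjoint.of_nonneg hc
    have hreal : (starRingEnd ℂ) c = c := by
      have h1 : (starRingEnd ℂ) c • x = c • x := by
        have := hsa.star_eq
        rwa [star_smul, hx.star_eq] at this
      have h2 : ((starRingEnd ℂ) c - c) • x = 0 := by rw [sub_smul, h1, sub_self]
      rcases smul_eq_zero.mp h2 with h | h
      · exact sub_eq_zero.mp h
      · exact absurd h hxne
    set t : ℝ := c.re with ht
    have hct : c = (t : ℂ) := (Complex.conj_eq_iff_re.mp hreal).symm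
    -- conjugate by xm : 0 ≤ xm * (c • x) * xm = -(t • xm³)
    have hm : (0 : A) ≤ -(t • (xm * xm * xm)) := by
      have h1 : (0 : A) ≤ star xm * (c • x) * xm := star_left_conjugate_nonneg hc xm
      have h2 : star xm * (c • x) * xm = -(c • (xm * xm * xm)) := by
        rw [hxmsa.star_eq, hsub]
        simp only [smul_sub, mul_sub, sub_mul, smul_mul_assoc, mul_smul_comm]
        rw [hxm_xp]
        simp [smul_smul]
      rw [h2, hct] at h1
      rw [show ((t : ℂ) • (xm * xm * xm)) = t • (xm * xm * xm) from by
        rw [← Complex.coe_smul]] at h1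
      exact h1
    -- conjugate by xp : 0 ≤ xp * (c • x) * xp = t • xp³
    have hp : (0 : A) ≤ t • (xp * xp * xp) := by
      have h1 : (0 : A) ≤ star xp * (c • x) * xp := star_left_conjugate_nonneg hc xp
      have h2 : star xp * (c • x) * xp = c • (xp * xp * xp) := by
        rw [hxpsa.star_eq, hsub]
        simp only [smul_sub, mul_sub, sub_mul, smul_mul_assoc, mul_smul_comm]
        rw [horth]
        simp [smul_smul]
      rw [h2, hct, show ((t : ℂ) • (xp * xp * xp)) = t • (xp * xp * xp) from by
        rw [← Complex.coe_smul]] at h1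
      exact h1
    have hpc : 0 ≤ xp * xp * xp := by
      have h' : xp * xp * xp = star xp * xp * xp := by rw [hxpsa.star_eq]
      rw [h']; exact star_left_conjugate_nonneg hxp xp
    have hmc : 0 ≤ xm * xm * xm := by
      have h' : xm * xm * xm = star xm * xm * xm := by rw [hxmsa.star_eq]
      rw [h']; exact star_left_conjugate_nonneg hxm xm
    have ht0 : t = 0 := by
      rcases lt_trichotomy t 0 with h | h | h
      · have h1 : (0:A) ≤ (-t) • (xp * xp * xp) := smul_nonneg (by linarith) hpc
        have h1' : t • (xp * xp * xp) ≤ 0 := by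
          rw [neg_smul] at h1; exact neg_nonneg.mp h1
        have h2 : t • (xp * xp * xp) = 0 := le_antisymm h1' hp
        rcases smul_eq_zero.mp h2 with h' | h'
        · linarith
        · exact absurd h' (cube_ne xp hxp hxp0)
      · exact h
      · have h1 : (0:A) ≤ t • (xm * xm * xm) := smul_nonneg h.le hmc
        have h2 : t • (xm * xm * xm) = 0 := le_antisymm (neg_nonneg.mp hm) h1
        rcases smul_eq_zero.mp h2 with h' | h'
        · linarith
        · exact absurd h' (cube_ne xm hxm hxm0)
    rw [hct, ht0, Complex.ofReal_zero]
  refine ⟨?_, fun c hc => by rw [key c hc, zero_smul]⟩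
  intro n a hpos
  set X : Matrix (Fin n) (Fin n) A := Matrix.of fun i j => a i j • x with hX
  have hmem : (e n) X ∈ AddSubmonoid.closure
      (Set.range fun s : M n => star s * s) := StarOrderedRing.nonneg_iff.mp hpos
  have hmem' : X ∈ AddSubmonoid.closure
      (Set.range fun s : Matrix (Fin n) (Fin n) A => star s * s) := by
    rw [show X = (e n).symm ((e n) X) from ((e n).symm_apply_apply X).symm]
    generalize (e n) X = y at hmem ⊢
    induction hmem using AddSubmonoid.closure_induction with
    | mem z hz =>
      obtain ⟨Z, rfl⟩ := hz
      exact AddSubmonoid.subset_closure ⟨(e n).symm Z, by simp [map_mul, map_star]⟩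
    | zero => simpa using AddSubmonoid.zero_mem _
    | add y z hy hz py pz => rw [map_add]; exact AddSubmonoid.add_mem _ py pz
  have hP := matrix_pos_aux hmem'
  ext i j
  have hdiag : X i i = a i i • x := rfl
  have hai : a i i = 0 := by
    have h' := (hP i).1
    rw [hdiag] at h'
    exact key _ h'
  have hXij : X i j = 0 := (hP i).2 (by rw [hdiag, hai, zero_smul]) j
  have h'' : a i j • x = 0 := hXij
  rcases smul_eq_zero.mp h'' with h | h
  · simpa using h
  · exact absurd h hxne
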